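/- A subset M ⊆ [n]^d is non-basic if and only if there exists a non-trivial annihilation function of M, i.e., a function c : M → ℤ, not identically zero, such that for every layer L of [n]^d, Σ_{x ∈ L ∩ M} c(x) = 0. -/

import Mathlib

open Matrix

section Aux
variable {k m : Type*} [Fintype k] [Fintype m] [DecidableEq k] [DecidableEq m]

lemma my_inj_iff_rank (B : Matrix k m ℝ) :
    Function.Injective B.mulVecLin ↔ B.rank = Fintype.card m := by
  rw [← LinearMap.ker_eq_bot]
  have h := LinearMap.finrank_range_add_finrank_ker B.mulVecLin
  rw [Module.finrank_fintype_fun_eq_card] at h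
  have hr : B.rank = Module.finrank ℝ (LinearMap.range B.mulVecLin) := rfl
  constructor
  · intro hk
    rw [hk] at h
    simpa [hr] using h
  · intro hR
    rw [hr] at hR
    have : Module.finrank ℝ (LinearMap.ker B.mulVecLin) = 0 := by omega
    exact Submodule.finrank_eq_zero.mp this

lemma my_surj_iff_rank (B : Matrix k m ℝ) :
    Function.Surjective B.mulVecLin ↔ B.rank = Fintype.card k := by
  rw [← LinearMap.range_eq_top]
  have hr : B.rank = Module.finrank ℝ (LinearMap.range B.mulVecLin) := rfl
  constructor
  · intro h
    rw [hr, h, finrank_top, Module.finrank_fintype_fun_eq_card]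
  · intro h
    apply Submodule.eq_top_of_finrank_eq
    rw [← hr, h, Module.finrank_fintype_fun_eq_card]

lemma my_mulVec_cast (B : Matrix k m ℚ) (c : m → ℚ) :
    (B.map (Rat.cast : ℚ → ℝ)).mulVec (fun x => ((c x : ℚ) : ℝ)) =
      fun j => ((B.mulVec c j : ℚ) : ℝ) := by
  funext j
  simp only [Matrix.mulVec, dotProduct, Matrix.map_apply]
  push_cast
  rfl

lemma my_inj_map_iff (B : Matrix k m ℚ) :
    Function.Injective (B.map (Rat.cast : ℚ → ℝ)).mulVecLin ↔
      Function.Injective B.mulVecLin := by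
  constructor
  · intro h c c' hcc
    have h2 : (B.map (Rat.cast : ℚ → ℝ)).mulVecLin (fun x => ((c x : ℚ) : ℝ)) =
        (B.map (Rat.cast : ℚ → ℝ)).mulVecLin (fun x => ((c' x : ℚ) : ℝ)) := by
      have hcc' : B.mulVec c = B.mulVec c' := hcc
      simp only [mulVecLin_apply, my_mulVec_cast, hcc']
    have h3 := h h2
    funext x
    exact_mod_cast congrFun h3 x
  · intro h
    obtain ⟨g, hg⟩ := (Matrix.toLin' B).exists_leftInverse_of_injective
      (by rw [Matrix.toLin'_apply', LinearMap.ker_eq_bot]; exact h)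
    have hCB : LinearMap.toMatrix' g * B = 1 := by
      have h2 := congrArg LinearMap.toMatrix' hg
      rwa [LinearMap.toMatrix'_comp, LinearMap.toMatrix'_toLin', LinearMap.toMatrix'_id] at h2
    have h3 : ((LinearMap.toMatrix' g).map ((Rat.castHom ℝ) : ℚ → ℝ)) *
        (B.map ((Rat.castHom ℝ) : ℚ → ℝ)) = 1 := by
      rw [← Matrix.map_mul, hCB, Matrix.map_one _ (by simp) (by simp)]
    have h3' : ((LinearMap.toMatrix' g).map (Rat.cast : ℚ → ℝ)) *
        (B.map (Rat.cast : ℚ → ℝ)) = 1 := by simpa using h3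
    intro c c' hcc
    have e := congrArg
      (fun v => (((LinearMap.toMatrix' g).map ((Rat.cast : ℚ → ℝ)))).mulVec v) hcc
    simpa [mulVecLin_apply, mulVec_mulVec, h3', one_mulVec] using e

end Aux


/-- A finite subset `M ⊆ [n]^d` (the cube identified with `Fin d → Fin n`) is *basic*
if every function on `M` decomposes as a sum of univariate functions. -/
def IsBasic {n d : ℕ} (M : Finset (Fin d → Fin n)) : Prop :=
  ∀ f : (Fin d → Fin n) → ℝ, ∃ g : Fin d → Fin n → ℝ,
    ∀ x ∈ M, f x = ∑ i, g i (x i)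

/-- `M ⊆ [n]^d` is non-basic iff there exists a non-trivial annihilation function of `M`:
an integer-valued function on `M`, not identically zero, whose sum over every layer is zero. -/
theorem nonbasic_iff_annihilation {n d : ℕ} (M : Finset (Fin d → Fin n)) :
    ¬ IsBasic M ↔
      ∃ c : (Fin d → Fin n) → ℤ,
        (∃ x ∈ M, c x ≠ 0) ∧
        ∀ (i : Fin d) (j : Fin n), ∑ x ∈ M.filter (fun x => x i = j), c x = 0 := by
  classical
  let B : Matrix (Fin d × Fin n) {x // x ∈ M} ℚ :=
    fun k x => if (x : Fin d → Fin n) k.1 = k.2 then 1 else 0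
  let Br : Matrix (Fin d × Fin n) {x // x ∈ M} ℝ := B.map (Rat.cast : ℚ → ℝ)
  have hBr : ∀ k x, Br k x = if (x : Fin d → Fin n) k.1 = k.2 then (1:ℝ) else 0 := by
    intro k x
    show (((if (x : Fin d → Fin n) k.1 = k.2 then 1 else 0 : ℚ)) : ℝ) = _
    split_ifs <;> simp
  -- computation of Brᵀ.mulVec
  have key : ∀ (g : Fin d × Fin n → ℝ) (x : {x // x ∈ M}),
      Brᵀ.mulVec g x = ∑ i, g (i, (x : Fin d → Fin n) i) := by
    intro g x
    simp only [Matrix.mulVec, dotProduct, Matrix.transpose_apply, hBr]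
    rw [Fintype.sum_prod_type]
    refine Finset.sum_congr rfl fun i _ => ?_
    simp [ite_mul, Finset.sum_ite_eq]
  -- computation of B.mulVec
  have key2 : ∀ (c : {x // x ∈ M} → ℚ) (i : Fin d) (j : Fin n),
      B.mulVec c (i, j) = ∑ x : {x // x ∈ M},
        if (x : Fin d → Fin n) i = j then c x else 0 := by
    intro c i j
    simp [Matrix.mulVec, dotProduct, B, ite_mul]
  -- bridge between filtered sums and subtype sums
  have bridge : ∀ (f : (Fin d → Fin n) → ℚ) (i : Fin d) (j : Fin n),
      ∑ x ∈ M.filter (fun x => x i = j), f x =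
        ∑ x : {x // x ∈ M}, if (x : Fin d → Fin n) i = j then f x else 0 := by
    intro f i j
    rw [Finset.sum_filter, ← Finset.sum_coe_sort M]
  have bridgeZ : ∀ (f : (Fin d → Fin n) → ℤ) (i : Fin d) (j : Fin n),
      ∑ x ∈ M.filter (fun x => x i = j), f x =
        ∑ x : {x // x ∈ M}, if (x : Fin d → Fin n) i = j then f x else 0 := by
    intro f i j
    rw [Finset.sum_filter, ← Finset.sum_coe_sort M]
  have step1 : IsBasic M ↔ Function.Surjective Brᵀ.mulVecLin := by
    constructor
    · intro hb h
      obtain ⟨g, hg⟩ := hb (fun x => if hx : x ∈ M then h ⟨x, hx⟩ else 0)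
      refine ⟨fun k => g k.1 k.2, ?_⟩
      funext x
      rw [Matrix.mulVecLin_apply, key]
      have := hg x.1 x.2
      simp only [x.2, dif_pos] at this
      exact this.symm
    · intro hs f
      obtain ⟨g, hg⟩ := hs (fun x => f x.1)
      refine ⟨fun i j => g (i, j), ?_⟩
      intro x hx
      have := congrFun hg ⟨x, hx⟩
      rw [Matrix.mulVecLin_apply, key] at this
      exact this.symm
  have step2 : Function.Surjective Brᵀ.mulVecLin ↔ Function.Injective B.mulVecLin := by
    rw [my_surj_iff_rank, Matrix.rank_transpose, ← my_inj_iff_rank, my_inj_map_iff]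
  have step3 : ¬ Function.Injective B.mulVecLin ↔
      ∃ c : {x // x ∈ M} → ℚ, c ≠ 0 ∧ B.mulVec c = 0 := by
    rw [← LinearMap.ker_eq_bot, Matrix.ker_mulVecLin_eq_bot_iff]
    push_neg
    constructor
    · rintro ⟨v, hv, hv0⟩
      exact ⟨v, hv0, hv⟩
    · rintro ⟨v, hv0, hv⟩
      exact ⟨v, hv, hv0⟩
  rw [step1, step2, step3]
  constructor
  · rintro ⟨c, hc0, hker⟩
    -- clear denominators
    set N : ℕ := ∏ x : {x // x ∈ M}, (c x).den with hN
    have hNpos : 0 < N := Finset.prod_pos fun x _ => (c x).pos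
    have hdvd : ∀ x : {x // x ∈ M}, ((c x).den : ℤ) ∣ (N : ℤ) := by
      intro x
      exact_mod_cast Int.natCast_dvd_natCast.mpr
        (Finset.dvd_prod_of_mem (fun x => (c x).den) (Finset.mem_univ x))
    set c' : (Fin d → Fin n) → ℤ := fun x =>
      if hx : x ∈ M then ((N : ℤ) / ((c ⟨x, hx⟩).den : ℤ)) * (c ⟨x, hx⟩).num else 0 with hc'
    have hcast : ∀ x : {x // x ∈ M}, ((c' x.1 : ℤ) : ℚ) = (N : ℚ) * c x := by
      rintro ⟨x, hx⟩
      simp only [c', dif_pos hx]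
      set q := c ⟨x, hx⟩ with hq
      have e : ((N : ℤ) / (q.den : ℤ)) * (q.den : ℤ) = (N : ℤ) :=
        Int.ediv_mul_cancel (hdvd ⟨x, hx⟩)
      have e2 : (((N : ℤ) / (q.den : ℤ) : ℤ) : ℚ) * ((q.den : ℕ) : ℚ) = (N : ℚ) := by
        exact_mod_cast congrArg (fun z : ℤ => (z : ℚ)) e
      have hd : ((q.den : ℕ) : ℚ) ≠ 0 := by exact_mod_cast q.pos.ne'
      have h2 : (q.num : ℚ) = q * ((q.den : ℕ) : ℚ) := (div_eq_iff hd).mp (Rat.num_div_den q)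
      push_cast
      rw [h2, mul_comm q _, ← mul_assoc, e2]
    refine ⟨c', ?_, ?_⟩
    · obtain ⟨x0, hx0⟩ := Function.ne_iff.mp hc0
      refine ⟨x0.1, x0.2, ?_⟩
      intro h
      apply hx0
      have hN0 : (N : ℚ) ≠ 0 := by exact_mod_cast hNpos.ne'
      have hz : (N : ℚ) * c x0 = 0 := by
        rw [← hcast x0]
        simp only [h, Int.cast_zero]
      rcases mul_eq_zero.mp hz with h' | h'
      · exact absurd h' hN0
      · exact h'
    · intro i j
      rw [bridgeZ c' i j]
      have hcast2 : ((∑ x : {x // x ∈ M},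
          if (x : Fin d → Fin n) i = j then c' x.1 else 0 : ℤ) : ℚ)
          = (N : ℚ) * ((B.mulVec c) (i, j)) := by
        rw [key2, Int.cast_sum, Finset.mul_sum]
        refine Finset.sum_congr rfl fun x _ => ?_
        by_cases hxi : (x : Fin d → Fin n) i = j
        · simp [hxi, hcast x]
        · simp [hxi]
      have h0 : (B.mulVec c) (i, j) = 0 := congrFun hker (i, j)
      rw [h0, mul_zero] at hcast2
      exact_mod_cast hcast2
  · rintro ⟨c, ⟨x0, hx0, hcx0⟩, hsum⟩
    refine ⟨fun x => ((c x.1 : ℤ) : ℚ), ?_, ?_⟩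
    · intro h
      apply hcx0
      have h1 : ((c x0 : ℤ) : ℚ) = 0 := by simpa using congrFun h ⟨x0, hx0⟩
      exact_mod_cast h1
    · funext k
      obtain ⟨i, j⟩ := k
      show (B.mulVec fun x => ((c x.1 : ℤ) : ℚ)) (i, j) = 0
      rw [key2]
      have hz := hsum i j
      rw [bridgeZ c i j] at hz
      calc (∑ x : {x // x ∈ M}, if (x : Fin d → Fin n) i = j then ((c x.1 : ℤ) : ℚ) else 0)
          = ((∑ x : {x // x ∈ M}, if (x : Fin d → Fin n) i = j then c x.1 else 0 : ℤ) : ℚ) := by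
            rw [Int.cast_sum]
            refine Finset.sum_congr rfl fun x _ => ?_
            by_cases hxi : (x : Fin d → Fin n) i = j <;> simp [hxi]
        _ = 0 := by rw [hz]; rfl
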